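/- Let (N_i) be a nondecreasing sequence of positive integers and (c_i) a nondecreasing sequence of functions ℕ → [0,1] with c_i(0) = 1, each c_i nonincreasing in its argument, and c_∞ = pointwise limit. Then the condition '(N_i → ∞) or (c_∞ ≡ 1)' holds if and only if for every M ∈ ℕ, min over functions f : {1,…,N_i} → ℕ with ∑_j f(j) = M of (1/N_i)·∑_{j=1}^{N_i} c_i(f(j)) tends to 1 as i → ∞. -/
import Mathlib


/-- The minimum, over allocations `f` of `M` particles among `N` sites, of the average
acceptance probability `(1/N)·∑_{j=1}^N c(f(j))`. -/
noncomputable def minAvg (N : ℕ) (c : ℕ → ℝ) (M : ℕ) : ℝ :=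
  sInf {r : ℝ | ∃ f : Fin N → ℕ, (∑ j, f j) = M ∧ r = (∑ j, c (f j)) / N}

lemma alloc_exists (N M : ℕ) (hN : 1 ≤ N) : ∃ f : Fin N → ℕ, (∑ j, f j) = M := by
  refine ⟨fun k => if k = (⟨0, hN⟩ : Fin N) then M else 0, ?_⟩
  simp [Finset.sum_ite_eq']

lemma minAvg_bddBelow (N : ℕ) (c : ℕ → ℝ) (M : ℕ) (hc : ∀ j, 0 ≤ c j) :
    BddBelow {r : ℝ | ∃ f : Fin N → ℕ, (∑ j, f j) = M ∧ r = (∑ j, c (f j)) / N} := by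
  refine ⟨0, fun r hr => ?_⟩
  obtain ⟨f, -, rfl⟩ := hr
  exact div_nonneg (Finset.sum_nonneg fun j _ => hc _) (Nat.cast_nonneg N)

lemma minAvg_le (N : ℕ) (c : ℕ → ℝ) (M : ℕ) (hc : ∀ j, 0 ≤ c j)
    (f : Fin N → ℕ) (hf : (∑ j, f j) = M) :
    minAvg N c M ≤ (∑ j, c (f j)) / N :=
  csInf_le (minAvg_bddBelow N c M hc) ⟨f, hf, rfl⟩

lemma le_minAvg (N : ℕ) (c : ℕ → ℝ) (M : ℕ) (hN : 1 ≤ N) (b : ℝ)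
    (h : ∀ f : Fin N → ℕ, (∑ j, f j) = M → b ≤ (∑ j, c (f j)) / N) :
    b ≤ minAvg N c M := by
  obtain ⟨f, hf⟩ := alloc_exists N M hN
  refine le_csInf ⟨_, f, hf, rfl⟩ ?_
  rintro r ⟨g, hg, rfl⟩
  exact h g hg

lemma minAvg_le_one (N : ℕ) (c : ℕ → ℝ) (M : ℕ) (hN : 1 ≤ N)
    (hc : ∀ j, 0 ≤ c j) (hc1 : ∀ j, c j ≤ 1) : minAvg N c M ≤ 1 := by
  obtain ⟨f, hf⟩ := alloc_exists N M hN
  refine (minAvg_le N c M hc f hf).trans ?_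
  rw [div_le_one (by exact_mod_cast hN)]
  calc (∑ j, c (f j)) ≤ ∑ _j : Fin N, (1:ℝ) := Finset.sum_le_sum fun j _ => hc1 _
  _ = N := by simp

lemma lower1 (N : ℕ) (hN : 1 ≤ N) (c : ℕ → ℝ) (hc0 : c 0 = 1) (hc : ∀ j, 0 ≤ c j)
    (M : ℕ) (f : Fin N → ℕ) (hf : (∑ j, f j) = M) :
    1 - (M:ℝ)/N ≤ (∑ j, c (f j)) / N := by
  have hNpos : (0:ℝ) < N := by exact_mod_cast hN
  set A := Finset.univ.filter (fun j => f j = 0) with hA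
  have h1 : (A.card : ℝ) ≤ ∑ j, c (f j) := by
    have : (A.card : ℝ) = ∑ j ∈ A, c (f j) := by
      rw [Finset.sum_congr rfl (fun j hj => by
        rw [(Finset.mem_filter.mp hj).2, hc0])]
      simp
    rw [this]
    exact Finset.sum_le_sum_of_subset_of_nonneg (Finset.subset_univ A)
      (fun j _ _ => hc _)
  have h2 : Aᶜ.card ≤ M := by
    calc Aᶜ.card = ∑ _j ∈ Aᶜ, 1 := by simp
    _ ≤ ∑ j ∈ Aᶜ, f j := Finset.sum_le_sum (fun j hj => by
        have : f j ≠ 0 := by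
          have := Finset.mem_compl.mp hj
          simp [hA] at this; exact this
        omega)
    _ ≤ ∑ j, f j := Finset.sum_le_sum_of_subset (Finset.subset_univ _)
    _ = M := hf
  have h3 : A.card + Aᶜ.card = N := by
    rw [Finset.card_add_card_compl]; simp
  have h4 : (N:ℝ) - M ≤ A.card := by
    have : N ≤ A.card + M := by omega
    have := (Nat.cast_le (α := ℝ)).mpr this
    push_cast at this
    linarith
  have e : 1 - (M:ℝ)/N = ((N:ℝ) - M)/N := by field_simp
  rw [e]
  gcongr
  exact h4.trans h1


lemma lower2 (N : ℕ) (hN : 1 ≤ N) (c : ℕ → ℝ)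
    (hdec : ∀ j, c (j + 1) ≤ c j)
    (M : ℕ) (f : Fin N → ℕ) (hf : (∑ j, f j) = M) :
    c M ≤ (∑ j, c (f j)) / N := by
  have hNpos : (0:ℝ) < N := by exact_mod_cast hN
  have hanti : Antitone c := antitone_nat_of_succ_le hdec
  rw [le_div_iff₀ hNpos]
  calc c M * N = ∑ _j : Fin N, c M := by simp [mul_comm]
  _ ≤ ∑ j, c (f j) := Finset.sum_le_sum fun j _ => hanti
      (hf ▸ Finset.single_le_sum (fun _ _ => Nat.zero_le _) (Finset.mem_univ j))
open Filter

/-- For nondecreasing sequences `Nᵢ` of patch sizes and `cᵢ ↑ c_∞` of control functions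
(each `cᵢ` nonincreasing with `cᵢ(0) = 1`), the condition `(Nᵢ → ∞) ∨ (c_∞ ≡ 1)` holds
iff for every `M`, the minimal average acceptance probability over allocations of `M`
particles among the `Nᵢ` sites tends to `1` as `i → ∞`. -/
theorem stmt7 (N : ℕ → ℕ) (c : ℕ → ℕ → ℝ) (cinf : ℕ → ℝ)
    (hN1 : ∀ i, 1 ≤ N i) (hNmono : ∀ i, N i ≤ N (i + 1))
    (hrange : ∀ i j, c i j ∈ Set.Icc (0 : ℝ) 1)
    (h0 : ∀ i, c i 0 = 1)
    (hdec : ∀ i j, c i (j + 1) ≤ c i j)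
    (hmono : ∀ i j, c i j ≤ c (i + 1) j)
    (hlim : ∀ j, Filter.Tendsto (fun i => c i j) Filter.atTop (nhds (cinf j))) :
    (Filter.Tendsto N Filter.atTop Filter.atTop ∨ ∀ j, cinf j = 1) ↔
      ∀ M : ℕ, Filter.Tendsto (fun i => minAvg (N i) (c i) M) Filter.atTop (nhds 1) := by
  have hub : ∀ M i, minAvg (N i) (c i) M ≤ 1 := fun M i =>
    minAvg_le_one _ _ _ (hN1 i) (fun j => (hrange i j).1) (fun j => (hrange i j).2)
  constructor
  · intro h M
    rcases h with hNt | hcinf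
    · have hlb : ∀ i, 1 - (M:ℝ)/(N i) ≤ minAvg (N i) (c i) M := fun i =>
        le_minAvg _ _ _ (hN1 i) _ (fun f hf =>
          lower1 _ (hN1 i) _ (h0 i) (fun j => (hrange i j).1) M f hf)
      have hNR : Tendsto (fun i => ((N i : ℝ))) atTop atTop :=
        tendsto_natCast_atTop_atTop.comp hNt
      have hdiv : Tendsto (fun i => (M:ℝ)/(N i)) atTop (nhds 0) :=
        Tendsto.div_atTop tendsto_const_nhds hNR
      have hlow : Tendsto (fun i => 1 - (M:ℝ)/(N i)) atTop (nhds 1) := by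
        have := (tendsto_const_nhds (x := (1:ℝ)) (f := atTop)).sub hdiv
        simpa using this
      exact tendsto_of_tendsto_of_tendsto_of_le_of_le hlow tendsto_const_nhds hlb (hub M)
    · have hlb : ∀ i, c i M ≤ minAvg (N i) (c i) M := fun i =>
        le_minAvg _ _ _ (hN1 i) _ (fun f hf => lower2 _ (hN1 i) _ (hdec i) M f hf)
      have hlow : Tendsto (fun i => c i M) atTop (nhds 1) := hcinf M ▸ hlim M
      exact tendsto_of_tendsto_of_tendsto_of_le_of_le hlow tendsto_const_nhds hlb (hub M)
  · intro h
    by_contra hcon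
    push_neg at hcon
    obtain ⟨hNt, j, hj⟩ := hcon
    have hNmono' : Monotone N := monotone_nat_of_le_succ hNmono
    have hB : ∃ B, ∀ i, N i ≤ B := by
      by_contra hB; push_neg at hB
      exact hNt (hNmono'.tendsto_atTop_atTop (fun b => (hB b).imp fun i hi => hi.le))
    obtain ⟨B, hB⟩ := hB
    have hcle : ∀ i k, c i k ≤ cinf k := by
      intro i k
      refine ge_of_tendsto (hlim k) ?_
      filter_upwards [Filter.eventually_ge_atTop i] with i' hi'
      exact (monotone_nat_of_le_succ (fun n => hmono n k)) hi'
    have hcinfj_le : cinf j ≤ 1 :=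
      le_of_tendsto (hlim j) (Filter.Eventually.of_forall fun i => (hrange i j).2)
    set M := j * B with hM
    have hkey : ∀ i, minAvg (N i) (c i) M ≤ cinf j := by
      intro i
      have hNpos : (0:ℝ) < N i := by exact_mod_cast hN1 i
      set f : Fin (N i) → ℕ :=
        fun k => j + if k = (⟨0, hN1 i⟩ : Fin (N i)) then M - N i * j else 0 with hfdef
      have hNle : N i * j ≤ M := by
        rw [hM, Nat.mul_comm]
        exact Nat.mul_le_mul_left j (hB i)
      have hfsum : (∑ k, f k) = M := by
        rw [hfdef]
        rw [Finset.sum_add_distrib]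
        simp [Finset.sum_ite_eq', Finset.card_univ]
        omega
      have h1 : minAvg (N i) (c i) M ≤ (∑ k, c i (f k)) / (N i) :=
        minAvg_le _ _ _ (fun k => (hrange i k).1) f hfsum
      refine h1.trans ?_
      rw [div_le_iff₀ hNpos]
      have hanti : Antitone (c i) := antitone_nat_of_succ_le (hdec i)
      calc (∑ k, c i (f k)) ≤ ∑ _k : Fin (N i), cinf j :=
          Finset.sum_le_sum fun k _ => (hanti (by simp [hfdef])).trans (hcle i j)
      _ = cinf j * N i := by simp [mul_comm]
    have h1le : (1:ℝ) ≤ cinf j :=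
      le_of_tendsto (h M) (Filter.Eventually.of_forall hkey)
    exact hj (le_antisymm hcinfj_le h1le)
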